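/- The ℚ-linear map Ψ : 𝔫[u] → 𝔫[u] determined on homogeneous elements by Ψ(x u^p) = |a|^{−p} x u^p for x ∈ 𝔫_a is a Lie algebra isomorphism from the untwisted current algebra (𝔫[u] with the bracket [x u^p, y u^q] = [x,y] u^{p+q}) onto the |·|-twisted current algebra (𝔫[u] with the bracket [x u^p, y u^q] = (|a|^p |b|^q / |a+b|^{p+q}) [x,y] u^{p+q}). -/

import Mathlib

noncomputable def twistCoeff {M : Type*} [AddCommMonoid M] (absM : M →+ ℤ)
    (a b : M) (p q : ℕ) : ℚ :=
  ((absM a : ℚ) ^ p * (absM b : ℚ) ^ q) / ((absM (a + b) : ℚ) ^ (p + q))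

section Aux

variable {M : Type*} [AddCommMonoid M] [DecidableEq M]
    {L : Type*} [AddCommGroup L] [Module ℚ L]

set_option linter.unusedSectionVars false in
/-- Two linear maps out of `ℕ →₀ L` agreeing on all `single p x` with `x`
homogeneous are equal. -/
lemma aux_ext_homog {N : Type*} [AddCommGroup N] [Module ℚ N]
    (𝒢 : M → Submodule ℚ L) (hInternal : DirectSum.IsInternal 𝒢)
    (F G : (ℕ →₀ L) →ₗ[ℚ] N)
    (h : ∀ (a : M) (x : L), x ∈ 𝒢 a → ∀ p : ℕ,
      F (Finsupp.single p x) = G (Finsupp.single p x)) : F = G := by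
  refine Finsupp.lhom_ext fun p x => ?_
  have hx : x ∈ iSup 𝒢 := by
    rw [hInternal.submodule_iSup_eq_top]; trivial
  refine Submodule.iSup_induction
    (motive := fun x => F (Finsupp.single p x) = G (Finsupp.single p x)) 𝒢 hx
    (fun a x hx => h a x hx p) ?_ ?_
  · simp
  · intro x y hx hy
    rw [Finsupp.single_add, map_add, map_add, hx, hy]

end Aux

theorem rescaling_is_iso_from_untwisted_to_twisted
    {M : Type*} [AddCommMonoid M] [DecidableEq M]
    {L : Type*} [LieRing L] [LieAlgebra ℚ L]
    (𝒢 : M → Submodule ℚ L)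
    (hInternal : DirectSum.IsInternal 𝒢)
    (hzero : 𝒢 0 = ⊥)
    (hbracket : ∀ (a b : M) (x y : L), x ∈ 𝒢 a → y ∈ 𝒢 b → ⁅x, y⁆ ∈ 𝒢 (a + b))
    (absM : M →+ ℤ)
    (habs : ∀ a : M, a ≠ 0 → 0 < absM a)
    (B₀ : (ℕ →₀ L) →ₗ[ℚ] (ℕ →₀ L) →ₗ[ℚ] (ℕ →₀ L))
    (hB₀ : ∀ (a b : M) (x y : L), x ∈ 𝒢 a → y ∈ 𝒢 b → ∀ p q : ℕ,
      B₀ (Finsupp.single p x) (Finsupp.single q y)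
        = Finsupp.single (p + q) ⁅x, y⁆)
    (B₁ : (ℕ →₀ L) →ₗ[ℚ] (ℕ →₀ L) →ₗ[ℚ] (ℕ →₀ L))
    (hB₁ : ∀ (a b : M) (x y : L), x ∈ 𝒢 a → y ∈ 𝒢 b → ∀ p q : ℕ,
      B₁ (Finsupp.single p x) (Finsupp.single q y)
        = Finsupp.single (p + q) (twistCoeff absM a b p q • ⁅x, y⁆))
    (Ψ : (ℕ →₀ L) →ₗ[ℚ] (ℕ →₀ L))
    (hΨ : ∀ (a : M) (x : L), x ∈ 𝒢 a → ∀ p : ℕ,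
      Ψ (Finsupp.single p x) = (((absM a : ℚ) ^ p)⁻¹) • Finsupp.single p x) :
    Function.Bijective Ψ ∧
      ∀ ξ η : ℕ →₀ L, Ψ (B₀ ξ η) = B₁ (Ψ ξ) (Ψ η) := by
  -- if `x ∈ 𝒢 a` and `x ≠ 0` then `a ≠ 0` and `|a| ≠ 0`
  have habs' : ∀ (a : M) (x : L), x ∈ 𝒢 a → x ≠ 0 → (absM a : ℚ) ≠ 0 := by
    intro a x hx hx0
    rcases eq_or_ne a 0 with rfl | ha
    · rw [hzero, Submodule.mem_bot] at hx; exact absurd hx hx0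
    · exact_mod_cast (habs a ha).ne'
  -- the inverse scaling map
  let e : (DirectSum M (fun a => ↥(𝒢 a))) ≃ₗ[ℚ] L :=
    LinearEquiv.ofBijective (DirectSum.coeLinearMap 𝒢) hInternal
  let φ : ℕ → L →ₗ[ℚ] L := fun p =>
    (DirectSum.toModule ℚ M L (fun a => ((absM a : ℚ) ^ p) • (𝒢 a).subtype)) ∘ₗ
      (e.symm : L →ₗ[ℚ] DirectSum M (fun a => ↥(𝒢 a)))
  have hφ : ∀ (a : M) (x : L) (hx : x ∈ 𝒢 a) (p : ℕ),
      φ p x = ((absM a : ℚ) ^ p) • x := by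
    intro a x hx p
    have h1 : e.symm x = DirectSum.lof ℚ M (fun a => ↥(𝒢 a)) a ⟨x, hx⟩ := by
      rw [LinearEquiv.symm_apply_eq]
      show x = DirectSum.coeLinearMap 𝒢 _
      rw [DirectSum.lof_eq_of, DirectSum.coeLinearMap_of]
    show DirectSum.toModule ℚ M L _ (e.symm x) = _
    rw [h1, DirectSum.toModule_lof]
    rfl
  let Φ : (ℕ →₀ L) →ₗ[ℚ] (ℕ →₀ L) :=
    Finsupp.lsum ℚ (fun p => (Finsupp.lsingle p) ∘ₗ φ p)
  have hΦ : ∀ (p : ℕ) (x : L), Φ (Finsupp.single p x) = Finsupp.single p (φ p x) := by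
    intro p x; simp [Φ]
  -- Φ is a two-sided inverse of Ψ
  have hΦΨ : Φ ∘ₗ Ψ = LinearMap.id := by
    refine aux_ext_homog 𝒢 hInternal _ _ ?_
    intro a x hx p
    rcases eq_or_ne x 0 with rfl | hx0
    · simp
    · have hA := habs' a x hx hx0
      simp only [LinearMap.comp_apply, LinearMap.id_apply, hΨ a x hx p, map_smul, hΦ,
        hφ a x hx p, Finsupp.smul_single, smul_smul,
        inv_mul_cancel₀ (pow_ne_zero p hA), one_smul]
  have hΨΦ : Ψ ∘ₗ Φ = LinearMap.id := by
    refine aux_ext_homog 𝒢 hInternal _ _ ?_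
    intro a x hx p
    rcases eq_or_ne x 0 with rfl | hx0
    · simp
    · have hA := habs' a x hx hx0
      have hxmem : ((absM a : ℚ) ^ p) • x ∈ 𝒢 a := Submodule.smul_mem _ _ hx
      simp only [LinearMap.comp_apply, LinearMap.id_apply, hΦ, hφ a x hx p,
        ← Finsupp.smul_single, map_smul, hΨ a x hx p, smul_smul,
        mul_inv_cancel₀ (pow_ne_zero p hA), one_smul]
  have hbij : Function.Bijective Ψ := by
    constructor
    · intro ξ η h
      have := congrArg Φ h
      simpa [← LinearMap.comp_apply, hΦΨ] using
        (LinearMap.congr_fun hΦΨ ξ).symm.trans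
          ((congrArg Φ h).trans (LinearMap.congr_fun hΦΨ η))
    · intro ξ
      exact ⟨Φ ξ, LinearMap.congr_fun hΨΦ ξ⟩
  refine ⟨hbij, ?_⟩
  -- the intertwining property, by bilinearity
  let Λ₁ : (ℕ →₀ L) →ₗ[ℚ] (ℕ →₀ L) →ₗ[ℚ] (ℕ →₀ L) :=
    (LinearMap.llcomp ℚ _ _ _ Ψ) ∘ₗ B₀
  let Λ₂ : (ℕ →₀ L) →ₗ[ℚ] (ℕ →₀ L) →ₗ[ℚ] (ℕ →₀ L) :=
    ((LinearMap.llcomp ℚ (ℕ →₀ L) (ℕ →₀ L) (ℕ →₀ L)).flip Ψ) ∘ₗ (B₁ ∘ₗ Ψ)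
  have key : Λ₁ = Λ₂ := by
    refine aux_ext_homog 𝒢 hInternal _ _ ?_
    intro a x hx p
    refine aux_ext_homog 𝒢 hInternal _ _ ?_
    intro b y hy q
    show Ψ (B₀ (Finsupp.single p x) (Finsupp.single q y))
      = B₁ (Ψ (Finsupp.single p x)) (Ψ (Finsupp.single q y))
    rcases eq_or_ne x 0 with rfl | hx0
    · simp
    rcases eq_or_ne y 0 with rfl | hy0
    · simp
    have hA := habs' a x hx hx0
    have hB := habs' b y hy hy0
    have hz : (⁅x, y⁆ : L) ∈ 𝒢 (a + b) := hbracket a b x y hx hy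
    rw [hB₀ a b x y hx hy p q, hΨ (a + b) ⁅x, y⁆ hz (p + q),
      hΨ a x hx p, hΨ b y hy q]
    simp only [map_smul, LinearMap.smul_apply]
    rw [hB₁ a b x y hx hy p q]
    rcases eq_or_ne (a + b) 0 with hab | hab
    · -- then ⁅x,y⁆ = 0
      have : (⁅x, y⁆ : L) = 0 := by
        rw [hab, hzero, Submodule.mem_bot] at hz; exact hz
      simp [this]
    · have hC : (absM (a + b) : ℚ) ≠ 0 := by
        exact_mod_cast (habs _ hab).ne'
      have hcoef : (((absM (a + b) : ℚ)) ^ (p + q))⁻¹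
          = ((absM b : ℚ) ^ q)⁻¹ * (((absM a : ℚ) ^ p)⁻¹ * twistCoeff absM a b p q) := by
        rw [twistCoeff]
        field_simp
      rw [hcoef, mul_smul, mul_smul]
      simp [Finsupp.smul_single]
  intro ξ η
  exact LinearMap.congr_fun (LinearMap.congr_fun key ξ) η
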